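/- Let E ⊆ ℝ^{n+1} be an n-dimensional Ahlfors–David regular set with dyadic system 𝔻(E), σ := H^n|_E, and fix K₀ ≥ 1 and ε ∈ (0,1). Let ℬ₀ ⊆ 𝔻(E) be a collection of cubes satisfying the packing condition ∑_{Q'⊆Q, Q'∈ℬ₀} σ(Q') ≤ C₁ σ(Q) for every Q ∈ 𝔻(E). For each Q ∈ 𝔻(E) define α_Q := σ(Q) if ℬ₀ ∩ 𝔻_ε(Q) ≠ ∅, and α_Q := 0 otherwise. Then ∑_{Q ⊆ Q₀} α_Q ≤ C_ε σ(Q₀) for every Q₀ ∈ 𝔻(E), where C_ε depends only on n, the ADR and dyadic constants, K₀, ε and C₁. -/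

import Mathlib

open MeasureTheory Metric Set
open scoped ENNReal NNReal InnerProductSpace

noncomputable section

abbrev ES (n : ℕ) : Type := EuclideanSpace ℝ (Fin (n + 1))

/-- The surface measure `σ = H^n|_E`. -/
def surfMeasure (n : ℕ) (E : Set (ES n)) : Measure (ES n) :=
  (μH[(n : ℝ)]).restrict E

/-- `E ⊆ ℝ^{n+1}` is `n`-dimensional Ahlfors–David regular with constant `C`. -/
def IsADR (n : ℕ) (C : ℝ) (E : Set (ES n)) : Prop :=
  IsClosed E ∧ 1 ≤ C ∧
    ∀ x ∈ E, ∀ r : ℝ, 0 < r → ENNReal.ofReal r < EMetric.diam E →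
      ENNReal.ofReal (C⁻¹ * r ^ n) ≤ μH[(n : ℝ)] (E ∩ ball x r) ∧
      μH[(n : ℝ)] (E ∩ ball x r) ≤ ENNReal.ofReal (C * r ^ n)

/-- A Christ–David–Semmes dyadic system on `E`. -/
structure DyadicSystem (n : ℕ) (E : Set (ES n)) where
  cubes : ℤ → Set (Set (ES n))
  center : Set (ES n) → ES n
  a₀ : ℝ
  γ : ℝ
  Cstar : ℝ
  a₀_pos : 0 < a₀
  γ_pos : 0 < γ
  Cstar_pos : 0 < Cstar
  borel : ∀ k : ℤ, ∀ Q ∈ cubes k, MeasurableSet Q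
  cover : ∀ k : ℤ, ⋃₀ cubes k = E
  nested : ∀ k m : ℤ, k ≤ m → ∀ Q ∈ cubes m, ∀ Q' ∈ cubes k, Q ⊆ Q' ∨ Q ∩ Q' = ∅
  parent : ∀ k : ℤ, ∀ Q ∈ cubes k, ∀ m : ℤ, m < k → ∃! Q', Q' ∈ cubes m ∧ Q ⊆ Q'
  diam_le : ∀ k : ℤ, ∀ Q ∈ cubes k, EMetric.diam Q ≤ ENNReal.ofReal (Cstar * 2 ^ (-k))
  center_mem : ∀ k : ℤ, ∀ Q ∈ cubes k, center Q ∈ Q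
  contains_ball : ∀ k : ℤ, ∀ Q ∈ cubes k, E ∩ ball (center Q) (a₀ * 2 ^ (-k)) ⊆ Q
  small_boundary : ∀ k : ℤ, ∀ Q ∈ cubes k, ∀ ϱ : ℝ, 0 < ϱ → ϱ < a₀ →
    μH[(n : ℝ)] {x ∈ Q | Metric.infDist x (E \ Q) ≤ ϱ * 2 ^ (-k)} ≤
      ENNReal.ofReal (Cstar * ϱ ^ γ) * μH[(n : ℝ)] Q

/-- Uniform rectifiability: big pieces of Lipschitz images. -/
def IsUR (n : ℕ) (θ M₀ : ℝ) (E : Set (ES n)) : Prop :=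
  0 < θ ∧ 0 < M₀ ∧
    ∀ x ∈ E, ∀ r : ℝ, 0 < r → ENNReal.ofReal r < EMetric.diam E →
      ∃ ρ : EuclideanSpace ℝ (Fin n) → ES n,
        LipschitzWith M₀.toNNReal ρ ∧
        ENNReal.ofReal (θ * r ^ n) ≤ μH[(n : ℝ)] (E ∩ ball x r ∩ ρ '' ball 0 r)

/-- `P` is an affine hyperplane of `ℝ^{n+1}`. -/
def IsHyperplane {n : ℕ} (P : Set (ES n)) : Prop :=
  ∃ (ν : ES n) (c : ℝ), ‖ν‖ = 1 ∧ P = {Z | ⟪ν, Z⟫_ℝ = c}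

/-- `H` is an open half-space with boundary hyperplane `P`. -/
def IsHalfSpacePair {n : ℕ} (H P : Set (ES n)) : Prop :=
  ∃ (ν : ES n) (c : ℝ), ‖ν‖ = 1 ∧ H = {Z | c < ⟪ν, Z⟫_ℝ} ∧ P = {Z | ⟪ν, Z⟫_ℝ = c}

/-- The `ε`-local BAUP condition for a cube `Q` of generation `k`. -/
def LocalBAUP {n : ℕ} (E : Set (ES n)) (D : DyadicSystem n E) (ε : ℝ) (k : ℤ)
    (Q : Set (ES n)) : Prop :=
  ∃ Ps : Set (Set (ES n)), Ps.Nonempty ∧ (∀ P ∈ Ps, IsHyperplane P) ∧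
    (∀ y ∈ E ∩ ball (D.center Q) (10 * Metric.diam Q),
      Metric.infDist y (⋃₀ Ps) ≤ ε * 2 ^ (-k)) ∧
    (∀ z ∈ (⋃₀ Ps) ∩ ball (D.center Q) (10 * Metric.diam Q),
      Metric.infDist z E ≤ ε * 2 ^ (-k))

/-- The `ε`-local WHSA condition with parameter `K₀` for a cube `Q` of generation `k`. -/
def LocalWHSA {n : ℕ} (E : Set (ES n)) (D : DyadicSystem n E) (K₀ ε : ℝ) (k : ℤ)
    (Q : Set (ES n)) : Prop :=
  ∃ Hs P : Set (ES n), IsHalfSpacePair Hs P ∧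
    (∀ Z ∈ P ∩ ball (D.center Q) (ε ^ (-2 : ℤ) * 2 ^ (-k)),
      Metric.infDist Z E ≤ ε * 2 ^ (-k)) ∧
    (∃ z ∈ closure Q, Metric.infDist z P ≤ K₀ ^ ((3 : ℝ) / 2) * 2 ^ (-k)) ∧
    Hs ∩ ball (D.center Q) (ε ^ (-2 : ℤ) * 2 ^ (-k)) ∩ E = ∅

/-- The family of (generations of) cubes `B` satisfies a Carleson packing condition with
constant `C`. -/
def PackedBy {n : ℕ} (E : Set (ES n)) (D : DyadicSystem n E)
    (B : ℤ → Set (ES n) → Prop) (C : ℝ) : Prop :=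
  ∀ k₀ : ℤ, ∀ Q₀ ∈ D.cubes k₀,
    ∑' p : {p : ℤ × Set (ES n) // p.2 ∈ D.cubes p.1 ∧ B p.1 p.2 ∧ p.2 ⊆ Q₀},
      μH[(n : ℝ)] p.1.2 ≤ ENNReal.ofReal C * μH[(n : ℝ)] Q₀

/-- Harmonic: `C²` with vanishing Laplacian. -/
def HarmonicOn {n : ℕ} (u : ES n → ℝ) (U : Set (ES n)) : Prop :=
  ContDiffOn ℝ 2 u U ∧ ∀ x ∈ U,
    ∑ i : Fin (n + 1),
      fderiv ℝ (fun y => fderiv ℝ u y (EuclideanSpace.single i 1)) x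
        (EuclideanSpace.single i 1) = 0

namespace P13

variable {n : ℕ}

lemma tsum_meas_le {X : Type*} [MeasurableSpace X] (μ : Measure X) {ι : Type*}
    (f : ι → Set X) (U : Set X) (hU : ∀ i, f i ⊆ U) (hm : ∀ i, MeasurableSet (f i))
    (hd : ∀ i j, i ≠ j → Disjoint (f i) (f j)) :
    ∑' i, μ (f i) ≤ μ U := by
  rw [ENNReal.tsum_eq_iSup_sum]
  refine iSup_le fun s => ?_
  rw [← measure_biUnion_finset (fun i _ j _ hij => hd i j hij) fun i _ => hm i]
  exact measure_mono (Set.iUnion₂_subset fun i _ => hU i)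

lemma sep_card_le (G : Finset (ES n)) {x : ES n} {D : ℝ} (hD : 0 < D)
    (hsub : ∀ p ∈ G, dist p x ≤ D)
    (hsep : ∀ p ∈ G, ∀ q ∈ G, p ≠ q → D / 2 ≤ dist p q) :
    G.card ≤ 8 ^ (n + 1) := by
  set v₁ := volume (ball (0 : ES n) 1) with hv₁
  have hv₁0 : v₁ ≠ 0 := (measure_ball_pos volume _ one_pos).ne'
  have hv₁t : v₁ ≠ ⊤ := measure_ball_lt_top.ne
  have hvol : ∀ p : ES n, volume (ball p (D / 4)) = ENNReal.ofReal ((D / 4) ^ (n + 1)) * v₁ := by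
    intro p
    rw [Measure.addHaar_ball_of_pos volume p (by positivity), finrank_euclideanSpace_fin]
  have hdisj : ∀ p ∈ G, ∀ q ∈ G, p ≠ q → Disjoint (ball p (D / 4)) (ball q (D / 4)) := by
    intro p hp q hq hpq
    rw [Set.disjoint_left]
    intro z hzp hzq
    simp only [mem_ball] at hzp hzq
    have h1 := hsep p hp q hq hpq
    have h2 := dist_triangle p z q
    rw [dist_comm p z] at h2
    linarith
  have hsubset : ∀ p ∈ G, ball p (D / 4) ⊆ ball x (2 * D) := by
    intro p hp z hz
    simp only [mem_ball] at hz ⊢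
    have := dist_triangle z p x
    have := hsub p hp
    linarith
  have h1 : (G.card : ℝ≥0∞) * (ENNReal.ofReal ((D / 4) ^ (n + 1)) * v₁)
      ≤ ENNReal.ofReal ((2 * D) ^ (n + 1)) * v₁ := by
    calc (G.card : ℝ≥0∞) * (ENNReal.ofReal ((D / 4) ^ (n + 1)) * v₁)
        = ∑ p ∈ G, volume (ball p (D / 4)) := by
          rw [Finset.sum_congr rfl fun p _ => hvol p, Finset.sum_const, nsmul_eq_mul]
      _ = volume (⋃ p ∈ G, ball p (D / 4)) :=
          (measure_biUnion_finset (fun p hp q hq h => hdisj p hp q hq h)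
            fun _ _ => measurableSet_ball).symm
      _ ≤ volume (ball x (2 * D)) := measure_mono (Set.iUnion₂_subset hsubset)
      _ = _ := by
          rw [Measure.addHaar_ball_of_pos volume x (by positivity), finrank_euclideanSpace_fin]
  have h2 : ENNReal.ofReal ((2 * D) ^ (n + 1))
      = ENNReal.ofReal ((8 : ℝ) ^ (n + 1)) * ENNReal.ofReal ((D / 4) ^ (n + 1)) := by
    rw [← ENNReal.ofReal_mul (by positivity), ← mul_pow]
    congr 2
    ring
  rw [h2, mul_assoc (ENNReal.ofReal ((8:ℝ) ^ (n + 1)))] at h1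
  have h3 : (G.card : ℝ≥0∞) ≤ ENNReal.ofReal ((8 : ℝ) ^ (n + 1)) := by
    have hc : ENNReal.ofReal ((D / 4) ^ (n + 1)) * v₁ ≠ 0 := by
      apply mul_ne_zero _ hv₁0
      simp only [ne_eq, ENNReal.ofReal_eq_zero, not_le]
      positivity
    have hct : ENNReal.ofReal ((D / 4) ^ (n + 1)) * v₁ ≠ ⊤ :=
      ENNReal.mul_ne_top ENNReal.ofReal_ne_top hv₁t
    exact (ENNReal.mul_le_mul_iff_left hc hct).mp h1
  have h4 : ENNReal.ofReal ((8 : ℝ) ^ (n + 1)) = ((8 ^ (n + 1) : ℕ) : ℝ≥0∞) := by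
    rw [ENNReal.ofReal_pow (by norm_num)]
    push_cast
    norm_num
  rw [h4] at h3
  exact_mod_cast h3

lemma adr_upper {C : ℝ} {E : Set (ES n)} (hE : IsADR n C E) {x : ES n} (hx : x ∈ E)
    {r : ℝ} (hr : 0 < r) :
    μH[(n : ℝ)] (E ∩ ball x r) ≤ ENNReal.ofReal (C * 8 ^ (n + 1) * r ^ n) := by
  obtain ⟨hcl, hC, hADR⟩ := hE
  by_cases hdiam : ENNReal.ofReal r < EMetric.diam E
  · refine (hADR x hx r hr hdiam).2.trans (ENNReal.ofReal_le_ofReal ?_)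
    have h8 : (1:ℝ) ≤ 8 ^ (n+1) := one_le_pow₀ (by norm_num)
    nlinarith [mul_nonneg (mul_nonneg (sub_nonneg.mpr h8) (by linarith : (0:ℝ) ≤ C))
      (pow_nonneg hr.le n)]
  · push_neg at hdiam
    have hfin : EMetric.diam E ≠ ⊤ := (lt_of_le_of_lt hdiam ENNReal.ofReal_lt_top).ne
    set Dd := (EMetric.diam E).toReal with hDd
    have hDr : Dd ≤ r := ENNReal.toReal_le_of_le_ofReal hr.le hdiam
    have hDnn : 0 ≤ Dd := ENNReal.toReal_nonneg
    have hEsub : ∀ p ∈ E, dist p x ≤ Dd := by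
      intro p hp
      have h := EMetric.edist_le_diam_of_mem hp hx
      rw [edist_dist] at h
      have h2 := ENNReal.toReal_mono hfin h
      rwa [ENNReal.toReal_ofReal dist_nonneg] at h2
    have hmono : μH[(n : ℝ)] (E ∩ ball x r) ≤ μH[(n : ℝ)] E := measure_mono inter_subset_left
    rcases eq_or_lt_of_le hDnn with hD0 | hDpos
    · -- diam = 0 : E ⊆ {x}
      have hsing : E ⊆ {x} := by
        intro p hp
        have := hEsub p hp
        rw [← hD0] at this
        simpa [dist_le_zero] using this
      refine hmono.trans ((measure_mono hsing).trans ?_)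
      rcases Nat.eq_zero_or_pos n with hn | hn
      · subst hn
        have h1 : μH[((0:ℕ):ℝ)] ({x} : Set (ES 0)) = 1 := by
          simpa using MeasureTheory.hausdorffMeasure_zero_singleton (x : ES 0)
        rw [h1]
        rw [show (1:ℝ≥0∞) = ENNReal.ofReal 1 by simp]
        refine ENNReal.ofReal_le_ofReal ?_
        have h0 : r ^ 0 = (1:ℝ) := pow_zero r
        have h8 : (8:ℝ) ^ (0+1) = 8 := by norm_num
        nlinarith
      · have hz : μH[(n : ℝ)] ({x} : Set (ES n)) = 0 := by
          have := hausdorffMeasure_of_dimH_lt (X := ES n) (s := {x}) (d := (n : ℝ≥0)) (by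
            rw [dimH_singleton]
            exact_mod_cast Nat.cast_pos.mpr hn)
          simpa using this
        rw [hz]
        exact zero_le
    · -- 0 < Dd : net argument
      set t := Dd / 2 with ht
      have htpos : 0 < t := by positivity
      have htdiam : ENNReal.ofReal t < EMetric.diam E := by
        rw [← ENNReal.ofReal_toReal hfin]
        exact ENNReal.ofReal_lt_ofReal_iff_of_nonneg htpos.le |>.mpr (by rw [← hDd]; linarith)
      classical
      set P : ℕ → Prop := fun c => ∃ G : Finset (ES n), ↑G ⊆ E ∧
        (∀ p ∈ G, ∀ q ∈ G, p ≠ q → t ≤ dist p q) ∧ G.card = c with hP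
      have hbound : ∀ c, P c → c ≤ 8 ^ (n + 1) := by
        rintro c ⟨G, hGE, hGsep, rfl⟩
        exact sep_card_le G hDpos (fun p hp => hEsub p (hGE hp))
          (by intro p hp q hq hpq; rw [← ht]; exact hGsep p hp q hq hpq)
      have hP0 : P 0 := ⟨∅, by simp, by simp, rfl⟩
      set cmax := Nat.findGreatest P (8 ^ (n + 1)) with hcmax
      have hPc : P cmax := Nat.findGreatest_spec (Nat.zero_le _) hP0
      obtain ⟨G, hGE, hGsep, hGcard⟩ := hPc
      have hmax : ∀ y ∈ E, ∃ p ∈ G, dist y p < t := by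
        intro y hy
        by_contra hcon
        push_neg at hcon
        have hyG : y ∉ G := fun hyG => absurd (hcon y hyG) (by simp [htpos])
        have hP' : P (cmax + 1) := by
          refine ⟨insert y G, ?_, ?_, by rw [Finset.card_insert_of_notMem hyG, hGcard]⟩
          · intro p hp
            rcases Finset.mem_insert.mp hp with rfl | hp
            · exact hy
            · exact hGE hp
          · intro p hp q hq hpq
            rcases Finset.mem_insert.mp hp with rfl | hp' <;>
              rcases Finset.mem_insert.mp hq with rfl | hq'
            · exact absurd rfl hpq
            · exact (hcon q hq')
            · rw [dist_comm]; exact (hcon p hp')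
            · exact hGsep p hp' q hq' hpq
        have := Nat.le_findGreatest (hbound _ hP') hP'
        omega
      have hcover : E ⊆ ⋃ p ∈ G, E ∩ ball p t := by
        intro y hy
        obtain ⟨p, hp, hdy⟩ := hmax y hy
        exact Set.mem_biUnion hp ⟨hy, by simpa [mem_ball] using hdy⟩
      have hμE : μH[(n : ℝ)] E ≤ (G.card : ℝ≥0∞) * ENNReal.ofReal (C * t ^ n) := by
        calc μH[(n : ℝ)] E ≤ ∑ p ∈ G, μH[(n : ℝ)] (E ∩ ball p t) :=
              (measure_mono hcover).trans (measure_biUnion_finset_le _ _)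
          _ ≤ ∑ _p ∈ G, ENNReal.ofReal (C * t ^ n) := by
              refine Finset.sum_le_sum fun p hp => ?_
              exact (hADR p (hGE hp) t htpos htdiam).2
          _ = _ := by rw [Finset.sum_const, nsmul_eq_mul]
      refine hmono.trans (hμE.trans ?_)
      have hGle : (G.card : ℝ≥0∞) ≤ ENNReal.ofReal ((8:ℝ) ^ (n + 1)) := by
        have h4 : ENNReal.ofReal ((8 : ℝ) ^ (n + 1)) = ((8 ^ (n + 1) : ℕ) : ℝ≥0∞) := by
          rw [ENNReal.ofReal_pow (by norm_num)]; push_cast; norm_num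
        rw [h4]
        exact_mod_cast hbound _ ⟨G, hGE, hGsep, rfl⟩
      calc (G.card : ℝ≥0∞) * ENNReal.ofReal (C * t ^ n)
          ≤ ENNReal.ofReal ((8:ℝ) ^ (n + 1)) * ENNReal.ofReal (C * t ^ n) :=
            mul_le_mul_left hGle _
        _ = ENNReal.ofReal ((8:ℝ) ^ (n + 1) * (C * t ^ n)) := by
            rw [← ENNReal.ofReal_mul (by positivity)]
        _ ≤ _ := by
            refine ENNReal.ofReal_le_ofReal ?_
            have htr : t ≤ r := by rw [ht]; linarith
            have h5' : t ^ n ≤ r ^ n := pow_le_pow_left₀ htpos.le htr n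
            have h5 : C * t ^ n ≤ C * r ^ n :=
              mul_le_mul_of_nonneg_left h5' (by linarith)
            have h6 : (0:ℝ) ≤ 8 ^ (n+1) := by positivity
            nlinarith [mul_le_mul_of_nonneg_left h5 h6]
      
lemma adr_compare {C : ℝ} {E : Set (ES n)} (hE : IsADR n C E) {Λ : ℝ} (hΛ : 1 ≤ Λ)
    {x y : ES n} (hx : x ∈ E) (hy : y ∈ E) {s t : ℝ} (hs : 0 < s)
    (hts : t ≤ Λ * s) (hxy : dist x y ≤ Λ * s) :
    μH[(n : ℝ)] (E ∩ ball x t)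
      ≤ ENNReal.ofReal (max 1 (C * 8 ^ (n + 1) * C * (4 * Λ) ^ n)) * μH[(n : ℝ)] (E ∩ ball y s) := by
  have hC : 1 ≤ C := hE.2.1
  have hΛs : 0 < Λ * s := by nlinarith
  by_cases hcase : ENNReal.ofReal (s / 2) < EMetric.diam E
  · -- main case
    have h1 : ball x t ⊆ ball y (2 * (Λ * s)) := by
      apply ball_subset_ball'
      linarith
    have h2 : μH[(n : ℝ)] (E ∩ ball x t) ≤ μH[(n : ℝ)] (E ∩ ball y (2 * (Λ * s))) :=
      measure_mono (inter_subset_inter_right _ h1)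
    have h3 : μH[(n : ℝ)] (E ∩ ball y (2 * (Λ * s)))
        ≤ ENNReal.ofReal (C * 8 ^ (n + 1) * (2 * (Λ * s)) ^ n) :=
      adr_upper hE hy (by linarith)
    have h4 : ENNReal.ofReal (C⁻¹ * (s / 2) ^ n) ≤ μH[(n : ℝ)] (E ∩ ball y s) := by
      refine ((hE.2.2 y hy (s / 2) (by linarith) hcase).1).trans (measure_mono ?_)
      exact inter_subset_inter_right _ (ball_subset_ball (by linarith))
    have h5 : C * 8 ^ (n + 1) * (2 * (Λ * s)) ^ n
        = (C * 8 ^ (n + 1) * C * (4 * Λ) ^ n) * (C⁻¹ * (s / 2) ^ n) := by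
      have hCne : C ≠ 0 := by linarith
      have hinv : C * C⁻¹ = 1 := mul_inv_cancel₀ hCne
      rw [show (2:ℝ) * (Λ * s) = (4 * Λ) * (s / 2) by ring, mul_pow]
      linear_combination (-(C * 8 ^ (n + 1) * (4 * Λ) ^ n * (s / 2) ^ n)) * hinv
    calc μH[(n : ℝ)] (E ∩ ball x t) ≤ ENNReal.ofReal (C * 8 ^ (n + 1) * (2 * (Λ * s)) ^ n) :=
          h2.trans h3
      _ = ENNReal.ofReal (C * 8 ^ (n + 1) * C * (4 * Λ) ^ n) * ENNReal.ofReal (C⁻¹ * (s / 2) ^ n) := by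
          rw [h5, ENNReal.ofReal_mul (by positivity)]
      _ ≤ ENNReal.ofReal (max 1 (C * 8 ^ (n + 1) * C * (4 * Λ) ^ n)) * μH[(n : ℝ)] (E ∩ ball y s) :=
          mul_le_mul (ENNReal.ofReal_le_ofReal (le_max_right _ _)) h4 zero_le zero_le
  · -- degenerate case : E ⊆ ball y s
    push_neg at hcase
    have hEb : E ⊆ ball y s := by
      intro p hp
      have h := EMetric.edist_le_diam_of_mem hp hy
      have h2 : edist p y ≤ ENNReal.ofReal (s / 2) := h.trans hcase
      rw [edist_dist] at h2
      have h3 : dist p y ≤ s / 2 := by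
        have := ENNReal.toReal_mono ENNReal.ofReal_ne_top h2
        rwa [ENNReal.toReal_ofReal dist_nonneg, ENNReal.toReal_ofReal (by linarith)] at this
      exact mem_ball.mpr (by linarith)
    have hEeq : E ∩ ball y s = E := inter_eq_self_of_subset_left hEb
    calc μH[(n : ℝ)] (E ∩ ball x t) ≤ μH[(n : ℝ)] E := measure_mono inter_subset_left
      _ = 1 * μH[(n : ℝ)] (E ∩ ball y s) := by rw [hEeq, one_mul]
      _ ≤ _ := by
          refine mul_le_mul_left ?_ _
          rw [show (1:ℝ≥0∞) = ENNReal.ofReal 1 by simp]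
          exact ENNReal.ofReal_le_ofReal (le_max_left _ _)

variable {E : Set (ES n)}

lemma cube_subset_E (D : DyadicSystem n E) {k : ℤ} {Q : Set (ES n)} (hQ : Q ∈ D.cubes k) :
    Q ⊆ E := by
  rw [← D.cover k]
  exact subset_sUnion_of_mem hQ

lemma cube_dist_le (D : DyadicSystem n E) {k : ℤ} {Q : Set (ES n)} (hQ : Q ∈ D.cubes k)
    {p q : ES n} (hp : p ∈ Q) (hq : q ∈ Q) : dist p q ≤ D.Cstar * 2 ^ (-k) := by
  have h := (EMetric.edist_le_diam_of_mem hp hq).trans (D.diam_le k Q hQ)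
  rw [edist_dist] at h
  have h2 := ENNReal.toReal_mono ENNReal.ofReal_ne_top h
  rwa [ENNReal.toReal_ofReal dist_nonneg,
    ENNReal.toReal_ofReal (mul_nonneg D.Cstar_pos.le (zpow_pos two_pos _).le)] at h2

lemma cube_disjoint (D : DyadicSystem n E) {k : ℤ} {Q Q' : Set (ES n)} (hQ : Q ∈ D.cubes k)
    (hQ' : Q' ∈ D.cubes k) (hne : Q ≠ Q') : Disjoint Q Q' := by
  rcases D.nested k k le_rfl Q hQ Q' hQ' with h | h
  · rcases D.nested k k le_rfl Q' hQ' Q hQ with h' | h'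
    · exact absurd (subset_antisymm h h') hne
    · rw [Set.disjoint_iff_inter_eq_empty, Set.inter_comm]
      exact h'
  · exact Set.disjoint_iff_inter_eq_empty.mpr h

lemma cube_eq_of_subset (D : DyadicSystem n E) {k k₀ : ℤ} {Q Q₀ : Set (ES n)} (hk : k ≤ k₀)
    (hQ : Q ∈ D.cubes k) (hQ₀ : Q₀ ∈ D.cubes k₀) (hsub : Q ⊆ Q₀) : Q = Q₀ := by
  rcases D.nested k k₀ hk Q₀ hQ₀ Q hQ with h | h
  · exact subset_antisymm hsub h
  · exfalso
    have hc := D.center_mem k Q hQ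
    have : D.center Q ∈ Q₀ ∩ Q := ⟨hsub hc, hc⟩
    rw [h] at this
    exact this

set_option maxHeartbeats 1600000 in
/-- The main estimate. -/
lemma main_aux {n : ℕ} {C_ADR : ℝ} {E : Set (ES n)} (hE : IsADR n C_ADR E)
    (D : DyadicSystem n E) {K₀ ε C₁ : ℝ} (hK₀ : 1 ≤ K₀) (hε : 0 < ε) (hC₁ : 0 < C₁)
    (M : ℕ) (hM : (2:ℝ) ^ (-(M:ℤ)) ≤ ε ^ ((3:ℝ)/2))
    (B₀ : ℤ → Set (ES n) → Prop) (hpack : PackedBy E D B₀ C₁)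
    {Af At Ac : ℝ}
    (hAf : Af = max 1 (C_ADR * 8 ^ (n + 1) * C_ADR *
      (4 * ((K₀ ^ 2 + 2 * D.Cstar + 1) * 2 ^ M / D.a₀ + 1)) ^ n))
    (hAt : At = max 1 (C_ADR * 8 ^ (n + 1) * C_ADR *
      (4 * ((K₀ ^ 2 + 4 * D.Cstar + 1) / (2 * D.a₀) + 1)) ^ n))
    (hAc : Ac = max 1 (C_ADR * 8 ^ (n + 1) * C_ADR *
      (4 * ((K₀ ^ 2 + 8 * D.Cstar) / D.a₀ + 1)) ^ n))
    (k₀ : ℤ) (Q₀ : Set (ES n)) (hQ₀ : Q₀ ∈ D.cubes k₀) :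
    ∑' p : {p : ℤ × Set (ES n) // p.2 ∈ D.cubes p.1 ∧
        (∃ (k' : ℤ) (Q' : Set (ES n)), Q' ∈ D.cubes k' ∧ B₀ k' Q' ∧
          ε ^ ((3 : ℝ) / 2) * 2 ^ (-p.1) ≤ 2 ^ (-k') ∧ (2 : ℝ) ^ (-k') ≤ 2 ^ (-p.1) ∧
          (Q' ∩ ball (D.center p.2) (K₀ ^ 2 * 2 ^ (-p.1))).Nonempty) ∧ p.2 ⊆ Q₀},
      μH[(n : ℝ)] p.1.2
      ≤ ENNReal.ofReal ((M + 1) * Af * (C₁ + At * (C₁ * Ac))) * μH[(n : ℝ)] Q₀ := by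
  classical
  have hCADR : 1 ≤ C_ADR := hE.2.1
  have ha₀ : 0 < D.a₀ := D.a₀_pos
  have ha₀' : D.a₀ ≠ 0 := ne_of_gt ha₀
  have hCs : 0 < D.Cstar := D.Cstar_pos
  have htz : ∀ k : ℤ, (0:ℝ) < (2:ℝ) ^ (-k) := fun k => zpow_pos two_pos _
  have hmono2 : ∀ k m : ℤ, k ≤ m → (2:ℝ) ^ (-m) ≤ 2 ^ (-k) :=
    fun k m h => zpow_le_zpow_right₀ one_le_two (by omega)
  have hε32 : 0 < ε ^ ((3:ℝ)/2) := Real.rpow_pos_of_pos hε _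
  have hK₀2 : 1 ≤ K₀ ^ 2 := one_le_pow₀ hK₀
  have hAf1 : 1 ≤ Af := hAf ▸ le_max_left _ _
  have hAt1 : 1 ≤ At := hAt ▸ le_max_left _ _
  have hAc1 : 1 ≤ Ac := hAc ▸ le_max_left _ _
  set z₀ := D.center Q₀ with hz₀def
  have hz₀Q : z₀ ∈ Q₀ := D.center_mem k₀ Q₀ hQ₀
  have hQ₀E : Q₀ ⊆ E := cube_subset_E D hQ₀
  have hz₀E : z₀ ∈ E := hQ₀E hz₀Q
  -- trivial case : measure 0
  by_cases hμ0 : μH[(n : ℝ)] Q₀ = 0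
  · refine le_trans (le_of_eq (ENNReal.tsum_eq_zero.mpr fun p =>
      le_antisymm ((measure_mono p.2.2.2).trans_eq hμ0) zero_le)) zero_le
  set S := {p : ℤ × Set (ES n) // p.2 ∈ D.cubes p.1 ∧
        (∃ (k' : ℤ) (Q' : Set (ES n)), Q' ∈ D.cubes k' ∧ B₀ k' Q' ∧
          ε ^ ((3 : ℝ) / 2) * 2 ^ (-p.1) ≤ 2 ^ (-k') ∧ (2 : ℝ) ^ (-k') ≤ 2 ^ (-p.1) ∧
          (Q' ∩ ball (D.center p.2) (K₀ ^ 2 * 2 ^ (-p.1))).Nonempty) ∧ p.2 ⊆ Q₀} with hSdef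
  by_cases hSne : Nonempty S
  swap
  · haveI := not_nonempty_iff.mp hSne
    rw [tsum_empty]
    exact zero_le
  -- choose witnesses
  choose wk wQ hw1 hw2 hw3 hw4 hw5 using fun s : S => s.2.2.1
  have hsQ : ∀ s : S, s.1.2 ∈ D.cubes s.1.1 := fun s => s.2.1
  have hssub : ∀ s : S, s.1.2 ⊆ Q₀ := fun s => s.2.2.2
  have hk_le : ∀ s : S, s.1.1 ≤ wk s := by
    intro s
    have h := (zpow_le_zpow_iff_right₀ (one_lt_two : (1:ℝ) < 2)).mp (hw4 s)
    omega
  have hk_ge : ∀ s : S, wk s ≤ s.1.1 + M := by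
    intro s
    have h1 : (2:ℝ) ^ (-(s.1.1 + M : ℤ)) ≤ 2 ^ (-wk s) := by
      have he : (2:ℝ) ^ (-(s.1.1 + M : ℤ)) = 2 ^ (-(M:ℤ)) * 2 ^ (-s.1.1) := by
        rw [← zpow_add₀ (by norm_num : (2:ℝ) ≠ 0)]
        congr 1
        ring
      rw [he]
      exact le_trans (mul_le_mul_of_nonneg_right hM (htz _).le) (hw3 s)
    have := (zpow_le_zpow_iff_right₀ (one_lt_two : (1:ℝ) < 2)).mp h1
    omega
  set Φ : S → (ℤ × Set (ES n)) × ℤ := fun s => ((wk s, wQ s), s.1.1) with hΦdef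
  have hregroup : ∑' s : S, μH[(n : ℝ)] s.1.2
      = ∑' q : (ℤ × Set (ES n)) × ℤ, ∑' s : {s : S // Φ s = q}, μH[(n : ℝ)] s.1.1.2 := by
    rw [← (Equiv.sigmaFiberEquiv Φ).tsum_eq (fun s : S => μH[(n : ℝ)] s.1.2),
      ENNReal.tsum_sigma']
    rfl
  set Rr : ℝ := K₀ ^ 2 + 2 * D.Cstar + 1 with hRr
  have hRrpos : 0 < Rr := by rw [hRr]; nlinarith
  set Λf : ℝ := Rr * 2 ^ M / D.a₀ + 1 with hΛf
  have hΛf1 : 1 ≤ Λf := by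
    have h2M : (0:ℝ) < 2 ^ M := by positivity
    have : 0 ≤ Rr * 2 ^ M / D.a₀ := div_nonneg (mul_nonneg hRrpos.le h2M.le) ha₀.le
    rw [hΛf]; linarith
  have hfib : ∀ (t : ℤ × Set (ES n)) (k : ℤ), {s : S // Φ s = (t, k)} →
      t.2 ∈ D.cubes t.1 ∧ B₀ t.1 t.2 ∧ t.1 - M ≤ k ∧ k ≤ t.1 := by
    rintro t k ⟨s, hs⟩
    have hs1 : (wk s, wQ s) = t := congrArg Prod.fst hs
    have hs2 : s.1.1 = k := congrArg Prod.snd hs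
    have ht1 : t.1 = wk s := by rw [← hs1]
    have ht2 : t.2 = wQ s := by rw [← hs1]
    refine ⟨by rw [ht1, ht2]; exact hw1 s, by rw [ht1, ht2]; exact hw2 s, ?_, ?_⟩
    · have h := hk_ge s; omega
    · have h := hk_le s; omega
  have hfibsum : ∀ (t : ℤ × Set (ES n)) (k : ℤ), Nonempty {s : S // Φ s = (t, k)} →
      ∑' s : {s : S // Φ s = (t, k)}, μH[(n : ℝ)] s.1.1.2
        ≤ ENNReal.ofReal Af * μH[(n : ℝ)] t.2 := by
    intro t k hne
    obtain ⟨s₀⟩ := hne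
    obtain ⟨htc, _htB, hkl, hku⟩ := hfib t k s₀
    set z' := D.center t.2 with hz'
    have hz'E : z' ∈ E := cube_subset_E D htc (D.center_mem _ _ htc)
    have hsub : ∀ s : {s : S // Φ s = (t, k)}, s.1.1.2 ⊆ E ∩ ball z' (Rr * 2 ^ (-k)) := by
      rintro ⟨s, hs⟩ q hq
      have hs1 : (wk s, wQ s) = t := congrArg Prod.fst hs
      have hs2 : s.1.1 = k := congrArg Prod.snd hs
      have ht2 : t.2 = wQ s := by rw [← hs1]
      have hQk : s.1.2 ∈ D.cubes k := hs2 ▸ hsQ s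
      refine ⟨cube_subset_E D (hsQ s) hq, mem_ball.mpr ?_⟩
      obtain ⟨w, hw_mem⟩ := hw5 s
      have d1 : dist q (D.center s.1.2) ≤ D.Cstar * 2 ^ (-k) :=
        cube_dist_le D hQk hq (D.center_mem s.1.1 s.1.2 (hsQ s))
      have d2 : dist (D.center s.1.2) w < K₀ ^ 2 * 2 ^ (-k) := by
        have h := mem_ball.mp hw_mem.2
        rw [dist_comm, hs2] at h
        exact h
      have d3 : dist w z' ≤ D.Cstar * 2 ^ (-t.1) := by
        refine cube_dist_le D htc ?_ (D.center_mem _ _ htc)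
        rw [ht2]; exact hw_mem.1
      have d3' : dist w z' ≤ D.Cstar * 2 ^ (-k) :=
        d3.trans (mul_le_mul_of_nonneg_left (hmono2 k t.1 hku) hCs.le)
      have htri := dist_triangle4 q (D.center s.1.2) w z'
      have hexp : (D.Cstar + K₀ ^ 2 + D.Cstar) * 2 ^ (-k)
          = D.Cstar * 2 ^ (-k) + K₀ ^ 2 * 2 ^ (-k) + D.Cstar * 2 ^ (-k) := by ring
      have hexp2 : Rr * 2 ^ (-k)
          = (D.Cstar + K₀ ^ 2 + D.Cstar) * 2 ^ (-k) + 2 ^ (-k) := by rw [hRr]; ring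
      have := htz k
      linarith
    have hdisj : ∀ (a b : {s : S // Φ s = (t, k)}), a ≠ b → Disjoint a.1.1.2 b.1.1.2 := by
      intro a b hab
      have ha2 : a.1.1.1 = k := congrArg Prod.snd a.2
      have hb2 : b.1.1.1 = k := congrArg Prod.snd b.2
      have hQa : a.1.1.2 ∈ D.cubes k := by have h := hsQ a.1; rwa [ha2] at h
      have hQb : b.1.1.2 ∈ D.cubes k := by have h := hsQ b.1; rwa [hb2] at h
      refine cube_disjoint D hQa hQb ?_
      intro hEq
      apply hab
      apply Subtype.ext; apply Subtype.ext
      exact Prod.ext (by rw [ha2, hb2]) hEq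
    have hstep1 : ∑' s : {s : S // Φ s = (t, k)}, μH[(n : ℝ)] s.1.1.2
        ≤ μH[(n : ℝ)] (E ∩ ball z' (Rr * 2 ^ (-k))) :=
      tsum_meas_le _ _ _ hsub (fun s => D.borel _ _ (hsQ s.1)) hdisj
    have hstep2 : μH[(n : ℝ)] (E ∩ ball z' (Rr * 2 ^ (-k)))
        ≤ ENNReal.ofReal Af * μH[(n : ℝ)] (E ∩ ball z' (D.a₀ * 2 ^ (-t.1))) := by
      rw [hAf]
      refine adr_compare hE hΛf1 hz'E hz'E (mul_pos ha₀ (htz t.1)) ?_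
        (by rw [dist_self]
            exact mul_nonneg (by linarith) (mul_pos ha₀ (htz t.1)).le)
      have h1 : (2:ℝ) ^ (-k) ≤ 2 ^ M * 2 ^ (-t.1) := by
        have he : (2:ℝ) ^ (-(t.1 - M)) = 2 ^ M * 2 ^ (-t.1) := by
          rw [show -(t.1 - (M:ℤ)) = (M:ℤ) + (-t.1) by ring,
            zpow_add₀ (by norm_num : (2:ℝ) ≠ 0), zpow_natCast]
        rw [← he]
        exact hmono2 _ _ (by omega)
      calc Rr * 2 ^ (-k) ≤ Rr * (2 ^ M * 2 ^ (-t.1)) :=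
            mul_le_mul_of_nonneg_left h1 hRrpos.le
        _ = (Rr * 2 ^ M / D.a₀) * (D.a₀ * 2 ^ (-t.1)) := by field_simp
        _ ≤ Λf * (D.a₀ * 2 ^ (-t.1)) :=
            mul_le_mul_of_nonneg_right (by rw [hΛf]; linarith)
              (mul_pos ha₀ (htz t.1)).le
    have hstep3 : μH[(n : ℝ)] (E ∩ ball z' (D.a₀ * 2 ^ (-t.1))) ≤ μH[(n : ℝ)] t.2 :=
      measure_mono (D.contains_ball t.1 t.2 htc)
    exact hstep1.trans (hstep2.trans (mul_le_mul_right hstep3 _))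
  set Tset : Set (ℤ × Set (ES n)) := {t | ∃ s : S, (wk s, wQ s) = t} with hTset
  have hsum2 : ∑' q : (ℤ × Set (ES n)) × ℤ, ∑' s : {s : S // Φ s = q}, μH[(n : ℝ)] s.1.1.2
      ≤ ENNReal.ofReal ((M + 1 : ℝ) * Af) * ∑' t : ↑Tset, μH[(n : ℝ)] (t : ℤ × Set (ES n)).2 := by
    rw [ENNReal.tsum_prod']
    have hpoint : ∀ t : ℤ × Set (ES n),
        (∑' k : ℤ, ∑' s : {s : S // Φ s = (t, k)}, μH[(n : ℝ)] s.1.1.2)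
        ≤ ENNReal.ofReal ((M + 1 : ℝ) * Af) *
          Set.indicator Tset (fun t => μH[(n : ℝ)] t.2) t := by
      intro t
      by_cases hT : t ∈ Tset
      · rw [Set.indicator_of_mem hT]
        calc (∑' k : ℤ, ∑' s : {s : S // Φ s = (t, k)}, μH[(n : ℝ)] s.1.1.2)
            ≤ ∑' k : ℤ, Set.indicator (↑(Finset.Icc (t.1 - (M:ℤ)) t.1) : Set ℤ)
                (fun _ => ENNReal.ofReal Af * μH[(n : ℝ)] t.2) k := by
              refine ENNReal.tsum_le_tsum fun k => ?_
              by_cases hne : Nonempty {s : S // Φ s = (t, k)}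
              · obtain ⟨_, _, h3, h4⟩ := hfib t k hne.some
                rw [Set.indicator_of_mem (by
                  simp only [Finset.coe_Icc, Set.mem_Icc]
                  omega)]
                exact hfibsum t k hne
              · haveI := not_nonempty_iff.mp hne
                rw [tsum_empty]
                exact zero_le
          _ = ∑ k ∈ Finset.Icc (t.1 - (M:ℤ)) t.1, (ENNReal.ofReal Af * μH[(n : ℝ)] t.2) := by
              rw [tsum_eq_sum (s := Finset.Icc (t.1 - (M:ℤ)) t.1) (fun k hk =>
                Set.indicator_of_notMem (by simpa using hk) _)]
              exact Finset.sum_congr rfl fun k hk => Set.indicator_of_mem (by simpa using hk) _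
          _ = ((M + 1 : ℕ) : ℝ≥0∞) * (ENNReal.ofReal Af * μH[(n : ℝ)] t.2) := by
              have hcard : (Finset.Icc (t.1 - (M:ℤ)) t.1).card = M + 1 := by
                rw [Int.card_Icc]
                omega
              rw [Finset.sum_const, hcard, nsmul_eq_mul]
          _ = ENNReal.ofReal ((M + 1 : ℝ) * Af) * μH[(n : ℝ)] t.2 := by
              rw [ENNReal.ofReal_mul (by positivity : (0:ℝ) ≤ (M + 1 : ℝ)), mul_assoc]
              congr 1
              rw [← ENNReal.ofReal_natCast (M + 1)]
              congr 1
              push_cast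
              ring
      · have hempty : ∀ k : ℤ, IsEmpty {s : S // Φ s = (t, k)} := by
          intro k
          exact ⟨fun s => hT ⟨s.1, congrArg Prod.fst s.2⟩⟩
        rw [Set.indicator_of_notMem hT]
        have hz : ∀ k : ℤ, (∑' s : {s : S // Φ s = (t, k)}, μH[(n : ℝ)] s.1.1.2) = 0 := by
          intro k
          haveI := hempty k
          exact tsum_empty
        simp only [hz, tsum_zero, mul_zero, le_refl]
    calc (∑' (t : ℤ × Set (ES n)) (k : ℤ), ∑' s : {s : S // Φ s = (t, k)}, μH[(n : ℝ)] s.1.1.2)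
        ≤ ∑' t : ℤ × Set (ES n), ENNReal.ofReal ((M + 1 : ℝ) * Af) *
            Set.indicator Tset (fun t => μH[(n : ℝ)] t.2) t := ENNReal.tsum_le_tsum hpoint
      _ = ENNReal.ofReal ((M + 1 : ℝ) * Af) * ∑' t : ℤ × Set (ES n),
            Set.indicator Tset (fun t => μH[(n : ℝ)] t.2) t := ENNReal.tsum_mul_left
      _ = _ := by rw [tsum_subtype Tset (fun t => μH[(n : ℝ)] t.2)]
  have hTprops : ∀ t : ↑Tset, (t : ℤ × Set (ES n)).2 ∈ D.cubes (t : ℤ × Set (ES n)).1 ∧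
      B₀ (t : ℤ × Set (ES n)).1 (t : ℤ × Set (ES n)).2 := by
    rintro ⟨t, s, hs⟩
    subst hs
    exact ⟨hw1 s, hw2 s⟩
  have hTbound : ∑' t : ↑Tset, μH[(n : ℝ)] (t : ℤ × Set (ES n)).2
      ≤ ENNReal.ofReal (C₁ + At * (C₁ * Ac)) * μH[(n : ℝ)] Q₀ := by
    by_cases hQE : Q₀ = E
    · -- every cube is inside Q₀ = E : single packing application
      have hιmem : ∀ t : ↑Tset, (t : ℤ × Set (ES n)).2 ∈ D.cubes (t : ℤ × Set (ES n)).1 ∧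
          B₀ (t : ℤ × Set (ES n)).1 (t : ℤ × Set (ES n)).2 ∧ (t : ℤ × Set (ES n)).2 ⊆ Q₀ :=
        fun t => ⟨(hTprops t).1, (hTprops t).2, by rw [hQE]; exact cube_subset_E D (hTprops t).1⟩
      have hinj : Function.Injective (fun t : ↑Tset =>
          (⟨(t : ℤ × Set (ES n)), hιmem t⟩ :
            {p : ℤ × Set (ES n) // p.2 ∈ D.cubes p.1 ∧ B₀ p.1 p.2 ∧ p.2 ⊆ Q₀})) := by
        intro a b hab
        have h := congrArg Subtype.val hab
        exact Subtype.ext h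
      have h1 := ENNReal.tsum_comp_le_tsum_of_injective hinj (fun p => μH[(n : ℝ)] p.1.2)
      refine (h1.trans (hpack k₀ Q₀ hQ₀)).trans (mul_le_mul_left (ENNReal.ofReal_le_ofReal ?_) _)
      nlinarith [mul_pos hC₁ (lt_of_lt_of_le one_pos hAc1), lt_of_lt_of_le one_pos hAt1]
    · -- Q₀ ≠ E : bounded below generations, neighbour top cubes
      have hbdd : ∃ b : ℤ, ∀ s : S, b ≤ (s : ℤ × Set (ES n)).1 := by
        by_contra hcon
        push_neg at hcon
        apply hQE
        refine subset_antisymm hQ₀E ?_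
        intro x hx
        obtain ⟨m, hm⟩ := pow_unbounded_of_one_lt (dist x z₀ / D.a₀) (one_lt_two)
        obtain ⟨s, hs⟩ := hcon (min k₀ (-(m:ℤ)))
        have hkk0 : (s : ℤ × Set (ES n)).1 ≤ k₀ := le_of_lt (lt_of_lt_of_le hs (min_le_left _ _))
        have hQeq : (s : ℤ × Set (ES n)).2 = Q₀ := cube_eq_of_subset D hkk0 (hsQ s) hQ₀ (hssub s)
        have hQ₀' : Q₀ ∈ D.cubes (s : ℤ × Set (ES n)).1 := by
          have h := hsQ s; rwa [hQeq] at h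
        refine D.contains_ball _ Q₀ hQ₀' ⟨hx, mem_ball.mpr ?_⟩
        have h2 : (2:ℝ) ^ (m:ℤ) ≤ 2 ^ (-(s : ℤ × Set (ES n)).1) := by
          refine zpow_le_zpow_right₀ one_le_two ?_
          have := lt_of_lt_of_le hs (min_le_right k₀ (-(m:ℤ)))
          omega
        have h3 : dist x z₀ < D.a₀ * 2 ^ (m:ℤ) := by
          rw [zpow_natCast]
          rw [div_lt_iff₀ ha₀] at hm
          linarith [mul_comm ((2:ℝ)^m) D.a₀, hm]
        calc dist x (D.center Q₀) < D.a₀ * 2 ^ (m:ℤ) := h3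
          _ ≤ D.a₀ * 2 ^ (-(s : ℤ × Set (ES n)).1) := mul_le_mul_of_nonneg_left h2 ha₀.le
      obtain ⟨kmin, hkmem, hkmin⟩ :
          ∃ kmin : ℤ, (∃ s : S, (s : ℤ × Set (ES n)).1 = kmin) ∧
            ∀ s : S, kmin ≤ (s : ℤ × Set (ES n)).1 := by
        obtain ⟨b, hb⟩ := hbdd
        obtain ⟨s1⟩ := hSne
        obtain ⟨lb, hlb1, hlb2⟩ := Int.exists_least_of_bdd
          (P := fun k : ℤ => ∃ s : S, (s : ℤ × Set (ES n)).1 = k)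
          ⟨b, by rintro z ⟨s, rfl⟩; exact hb s⟩ ⟨(s1 : ℤ × Set (ES n)).1, s1, rfl⟩
        exact ⟨lb, hlb1, fun s => hlb2 _ ⟨s, rfl⟩⟩
      set m₀ : ℤ := min kmin k₀ with hm₀
      have hm₀k₀ : m₀ ≤ k₀ := min_le_right _ _
      have hm₀s : ∀ s : S, m₀ ≤ (s : ℤ × Set (ES n)).1 :=
        fun s => (min_le_left _ _).trans (hkmin s)
      have hQ₀m₀ : Q₀ ∈ D.cubes m₀ := by
        rcases le_or_gt k₀ kmin with h | h
        · rw [hm₀, min_eq_right h]; exact hQ₀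
        · rw [hm₀, min_eq_left h.le]
          obtain ⟨s1, hs1⟩ := hkmem
          have heq : (s1 : ℤ × Set (ES n)).2 = Q₀ :=
            cube_eq_of_subset D (by omega) (hsQ s1) hQ₀ (hssub s1)
          have h := hsQ s1; rwa [heq, hs1] at h
      set ρ : ℝ := (K₀ ^ 2 + 2 * D.Cstar) * 2 ^ (-m₀) with hρ
      set capr : ℝ := (K₀ ^ 2 + 4 * D.Cstar + 1) * 2 ^ (-m₀) with hcapr
      set gg : ℤ := m₀ - 1 with hgg
      have h2gg : (2:ℝ) ^ (-gg) = 2 * 2 ^ (-m₀) := by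
        rw [hgg, show -(m₀ - 1) = 1 + -m₀ by ring, zpow_add₀ (by norm_num : (2:ℝ) ≠ 0), zpow_one]
      set Rset : Set (Set (ES n)) := {R | R ∈ D.cubes gg ∧ (R ∩ ball z₀ ρ).Nonempty} with hRsetdef
      have hwitloc : ∀ s : S, (wQ s ∩ ball z₀ ρ).Nonempty := by
        intro s
        obtain ⟨w, hw_mem⟩ := hw5 s
        refine ⟨w, hw_mem.1, mem_ball.mpr ?_⟩
        have d2 : dist w (D.center (s : ℤ × Set (ES n)).2)
            < K₀ ^ 2 * 2 ^ (-(s : ℤ × Set (ES n)).1) := mem_ball.mp hw_mem.2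
        have d2' : dist w (D.center (s : ℤ × Set (ES n)).2) < K₀ ^ 2 * 2 ^ (-m₀) :=
          d2.trans_le (mul_le_mul_of_nonneg_left (hmono2 _ _ (hm₀s s)) (by positivity))
        have d4 : dist (D.center (s : ℤ × Set (ES n)).2) z₀ ≤ D.Cstar * 2 ^ (-k₀) :=
          cube_dist_le D hQ₀ (hssub s (D.center_mem _ _ (hsQ s))) hz₀Q
        have d4' : dist (D.center (s : ℤ × Set (ES n)).2) z₀ ≤ D.Cstar * 2 ^ (-m₀) :=
          d4.trans (mul_le_mul_of_nonneg_left (hmono2 _ _ hm₀k₀) hCs.le)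
        have htri := dist_triangle w (D.center (s : ℤ × Set (ES n)).2) z₀
        have hexp : ρ = K₀ ^ 2 * 2 ^ (-m₀) + D.Cstar * 2 ^ (-m₀) + D.Cstar * 2 ^ (-m₀) := by
          rw [hρ]; ring
        linarith [mul_pos hCs (htz m₀)]
      have hparent : ∀ t : ↑Tset, ∃ R, R ∈ D.cubes gg ∧ (t : ℤ × Set (ES n)).2 ⊆ R := by
        intro t
        obtain ⟨s, hs⟩ := t.2
        have ht1 : wk s = (t : ℤ × Set (ES n)).1 := congrArg Prod.fst hs
        have hgt : gg < (t : ℤ × Set (ES n)).1 := by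
          have h1 := hm₀s s
          have h2 := hk_le s
          omega
        obtain ⟨R, ⟨hR1, hR2⟩, _⟩ := D.parent _ _ (hTprops t).1 gg hgt
        exact ⟨R, hR1, hR2⟩
      choose Rmap hRcube hRsub using hparent
      have hRmem : ∀ t : ↑Tset, Rmap t ∈ Rset := by
        intro t
        refine ⟨hRcube t, ?_⟩
        obtain ⟨s, hs⟩ := t.2
        obtain ⟨w, hw1', hw2'⟩ := hwitloc s
        have h2 : wQ s = (t : ℤ × Set (ES n)).2 := congrArg Prod.snd hs
        exact ⟨w, hRsub t (h2 ▸ hw1'), hw2'⟩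
      have hregroup2 : ∑' t : ↑Tset, μH[(n : ℝ)] (t : ℤ × Set (ES n)).2
          = ∑' R : Set (ES n), ∑' t : {t : ↑Tset // Rmap t = R},
              μH[(n : ℝ)] ((t : ↑Tset) : ℤ × Set (ES n)).2 := by
        rw [← (Equiv.sigmaFiberEquiv Rmap).tsum_eq
          (fun t : ↑Tset => μH[(n : ℝ)] (t : ℤ × Set (ES n)).2), ENNReal.tsum_sigma']
        rfl
      have hRbound : ∀ R : Set (ES n),
          (∑' t : {t : ↑Tset // Rmap t = R}, μH[(n : ℝ)] ((t : ↑Tset) : ℤ × Set (ES n)).2)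
          ≤ Set.indicator Rset (fun R => ENNReal.ofReal C₁ * μH[(n : ℝ)] R) R := by
        intro R
        by_cases hne : Nonempty {t : ↑Tset // Rmap t = R}
        · obtain ⟨t₀⟩ := hne
          have hRR : R ∈ Rset := t₀.2 ▸ hRmem t₀.1
          rw [Set.indicator_of_mem hRR]
          have hinj2 : Function.Injective (fun t : {t : ↑Tset // Rmap t = R} =>
              (⟨((t.1 : ↑Tset) : ℤ × Set (ES n)), (hTprops t.1).1, (hTprops t.1).2,
                by have h := hRsub t.1; rwa [t.2] at h⟩ :
                {p : ℤ × Set (ES n) // p.2 ∈ D.cubes p.1 ∧ B₀ p.1 p.2 ∧ p.2 ⊆ R})) := by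
            intro a b hab
            have h := congrArg Subtype.val hab
            apply Subtype.ext; apply Subtype.ext
            exact h
          exact (ENNReal.tsum_comp_le_tsum_of_injective hinj2
            (fun p => μH[(n : ℝ)] p.1.2)).trans (hpack gg R hRR.1)
        · haveI := not_nonempty_iff.mp hne
          rw [tsum_empty]
          exact zero_le
      set cap := μH[(n : ℝ)] (E ∩ ball z₀ capr) with hcapdef
      have hK2x : 1 * (2:ℝ) ^ (-m₀) ≤ K₀ ^ 2 * 2 ^ (-m₀) :=
        mul_le_mul_of_nonneg_right hK₀2 (htz m₀).le
      have hCsx : 0 < D.Cstar * (2:ℝ) ^ (-m₀) := mul_pos hCs (htz m₀)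
      have hcaprpos : 0 < capr := by
        have hexp : capr = K₀ ^ 2 * 2 ^ (-m₀) + 4 * (D.Cstar * 2 ^ (-m₀)) + 2 ^ (-m₀) := by
          rw [hcapr]; ring
        linarith [htz m₀]
      have hQ₀cap : Q₀ ⊆ E ∩ ball z₀ capr := by
        intro q hq
        refine ⟨hQ₀E hq, mem_ball.mpr ?_⟩
        have hd := cube_dist_le D hQ₀ hq hz₀Q
        have h2 : D.Cstar * 2 ^ (-k₀) ≤ D.Cstar * 2 ^ (-m₀) :=
          mul_le_mul_of_nonneg_left (hmono2 _ _ hm₀k₀) hCs.le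
        have hexp : capr = K₀ ^ 2 * 2 ^ (-m₀) + 4 * (D.Cstar * 2 ^ (-m₀)) + 2 ^ (-m₀) := by
          rw [hcapr]; ring
        linarith [htz m₀]
      have hcap0 : cap ≠ 0 :=
        fun h => hμ0 (le_antisymm ((measure_mono hQ₀cap).trans_eq h) zero_le)
      have hcapfin : cap ≠ ⊤ :=
        ((adr_upper hE hz₀E hcaprpos).trans_lt ENNReal.ofReal_lt_top).ne
      set Λt' : ℝ := (K₀ ^ 2 + 4 * D.Cstar + 1) / (2 * D.a₀) + 1 with hΛt'
      have hΛt1 : 1 ≤ Λt' := by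
        have h0 : 0 ≤ (K₀ ^ 2 + 4 * D.Cstar + 1) / (2 * D.a₀) :=
          div_nonneg (by nlinarith) (by linarith)
        rw [hΛt']; linarith
      have hAt' : At = max 1 (C_ADR * 8 ^ (n + 1) * C_ADR * (4 * Λt') ^ n) := hAt
      -- geometry of cubes in Rset
      have hRgeom : ∀ R : Set (ES n), R ∈ Rset →
          dist (D.center R) z₀ ≤ (K₀ ^ 2 + 4 * D.Cstar) * 2 ^ (-m₀) ∧
          R ⊆ E ∩ ball z₀ capr := by
        rintro R ⟨hRc, w', hw'R, hw'b⟩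
        have hcR := D.center_mem _ _ hRc
        have hdcw : dist (D.center R) w' ≤ D.Cstar * 2 ^ (-gg) := cube_dist_le D hRc hcR hw'R
        have hdcw2 : dist (D.center R) w' ≤ 2 * (D.Cstar * 2 ^ (-m₀)) := by
          rw [← mul_assoc, mul_comm (2:ℝ) D.Cstar, mul_assoc, ← h2gg]
          exact hdcw
        have hwz : dist w' z₀ < ρ := mem_ball.mp hw'b
        have hexpρ : ρ = K₀ ^ 2 * 2 ^ (-m₀) + 2 * (D.Cstar * 2 ^ (-m₀)) := by rw [hρ]; ring
        constructor
        · have htri := dist_triangle (D.center R) w' z₀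
          have hexp : (K₀ ^ 2 + 4 * D.Cstar) * 2 ^ (-m₀)
              = K₀ ^ 2 * 2 ^ (-m₀) + 4 * (D.Cstar * 2 ^ (-m₀)) := by ring
          linarith
        · intro q hq
          refine ⟨cube_subset_E D hRc hq, mem_ball.mpr ?_⟩
          have hdq : dist q w' ≤ 2 * (D.Cstar * 2 ^ (-m₀)) := by
            have := cube_dist_le D hRc hq hw'R
            rw [← mul_assoc, mul_comm (2:ℝ) D.Cstar, mul_assoc, ← h2gg]
            exact this
          have htri := dist_triangle q w' z₀
          have hexp : capr = K₀ ^ 2 * 2 ^ (-m₀) + 4 * (D.Cstar * 2 ^ (-m₀)) + 2 ^ (-m₀) := by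
            rw [hcapr]; ring
          linarith [htz m₀]
      have hcount : ∀ c : ℝ≥0∞, (∑' _R : ↑Rset, c) ≤ ENNReal.ofReal At * c := by
        intro c
        rw [ENNReal.tsum_eq_iSup_sum]
        refine iSup_le fun F => ?_
        rw [Finset.sum_const, nsmul_eq_mul]
        refine mul_le_mul_left ?_ c
        have hpercube : ∀ R : ↑Rset, cap ≤ ENNReal.ofReal At *
            μH[(n : ℝ)] (E ∩ ball (D.center (R : Set (ES n))) (D.a₀ * 2 ^ (-gg))) := by
          intro R
          have hRc := R.2.1
          have hcRE : D.center (R : Set (ES n)) ∈ E :=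
            cube_subset_E D hRc (D.center_mem _ _ hRc)
          rw [hAt']
          refine adr_compare hE hΛt1 hz₀E hcRE (mul_pos ha₀ (htz gg)) ?_ ?_
          · rw [h2gg, hΛt', hcapr]
            have heq : ((K₀ ^ 2 + 4 * D.Cstar + 1) / (2 * D.a₀)) * (D.a₀ * (2 * 2 ^ (-m₀)))
                = (K₀ ^ 2 + 4 * D.Cstar + 1) * 2 ^ (-m₀) := by
              field_simp
            nlinarith [mul_pos ha₀ (htz m₀)]
          · rw [h2gg, hΛt']
            have hd := (hRgeom (R : Set (ES n)) R.2).1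
            have heq : ((K₀ ^ 2 + 4 * D.Cstar + 1) / (2 * D.a₀)) * (D.a₀ * (2 * 2 ^ (-m₀)))
                = (K₀ ^ 2 + 4 * D.Cstar + 1) * 2 ^ (-m₀) := by
              field_simp
            nlinarith [mul_pos ha₀ (htz m₀), htz m₀, dist_comm z₀ (D.center (R : Set (ES n)))]
        have hpieces_disjoint : ∀ a b : ↑Rset, a ≠ b →
            Disjoint (E ∩ ball (D.center (a : Set (ES n))) (D.a₀ * 2 ^ (-gg)))
              (E ∩ ball (D.center (b : Set (ES n))) (D.a₀ * 2 ^ (-gg))) := by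
          intro a b hab
          refine Disjoint.mono (D.contains_ball gg _ a.2.1) (D.contains_ball gg _ b.2.1) ?_
          exact cube_disjoint D a.2.1 b.2.1 (fun h => hab (Subtype.ext h))
        have hpieces_sub : ∀ a : ↑Rset,
            E ∩ ball (D.center (a : Set (ES n))) (D.a₀ * 2 ^ (-gg)) ⊆ E ∩ ball z₀ capr :=
          fun a => (D.contains_ball gg _ a.2.1).trans ((hRgeom (a : Set (ES n)) a.2).2)
        have hsum : (F.card : ℝ≥0∞) * cap ≤ ENNReal.ofReal At * cap := by
          calc (F.card : ℝ≥0∞) * cap = ∑ _R ∈ F, cap := by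
                rw [Finset.sum_const, nsmul_eq_mul]
            _ ≤ ∑ R ∈ F, ENNReal.ofReal At *
                  μH[(n : ℝ)] (E ∩ ball (D.center (R : Set (ES n))) (D.a₀ * 2 ^ (-gg))) :=
                Finset.sum_le_sum fun R _ => hpercube R
            _ = ENNReal.ofReal At * ∑ R ∈ F,
                  μH[(n : ℝ)] (E ∩ ball (D.center (R : Set (ES n))) (D.a₀ * 2 ^ (-gg))) := by
                rw [Finset.mul_sum]
            _ = ENNReal.ofReal At * μH[(n : ℝ)]
                  (⋃ R ∈ F, E ∩ ball (D.center (R : Set (ES n))) (D.a₀ * 2 ^ (-gg))) := by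
                rw [measure_biUnion_finset (fun a _ b _ hab => hpieces_disjoint a b hab)
                  (fun a _ => hE.1.measurableSet.inter measurableSet_ball)]
            _ ≤ ENNReal.ofReal At * cap :=
                mul_le_mul_right (measure_mono (Set.iUnion₂_subset fun a _ => hpieces_sub a)) _
        exact (ENNReal.mul_le_mul_iff_left hcap0 hcapfin).mp hsum
      set Λc' : ℝ := (K₀ ^ 2 + 8 * D.Cstar) / D.a₀ + 1 with hΛc'
      have hΛc1 : 1 ≤ Λc' := by
        have h0 : 0 ≤ (K₀ ^ 2 + 8 * D.Cstar) / D.a₀ := div_nonneg (by nlinarith) ha₀.le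
        rw [hΛc']; linarith
      have hAc' : Ac = max 1 (C_ADR * 8 ^ (n + 1) * C_ADR * (4 * Λc') ^ n) := hAc
      have hRcmp : ∀ R : ↑Rset,
          μH[(n : ℝ)] (R : Set (ES n)) ≤ ENNReal.ofReal Ac * μH[(n : ℝ)] Q₀ := by
        intro R
        have hRc := R.2.1
        have hcR := D.center_mem _ _ hRc
        have hcRE : D.center (R : Set (ES n)) ∈ E := cube_subset_E D hRc hcR
        have h1 : μH[(n : ℝ)] (R : Set (ES n)) ≤ μH[(n : ℝ)]
            (E ∩ ball (D.center (R : Set (ES n))) (2 * D.Cstar * 2 ^ (-gg))) := by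
          refine measure_mono fun q hq => ⟨cube_subset_E D hRc hq, mem_ball.mpr ?_⟩
          refine lt_of_le_of_lt (cube_dist_le D hRc hq hcR) ?_
          nlinarith [htz gg, hCs]
        have h2 : μH[(n : ℝ)] (E ∩ ball (D.center (R : Set (ES n))) (2 * D.Cstar * 2 ^ (-gg)))
            ≤ ENNReal.ofReal Ac * μH[(n : ℝ)] (E ∩ ball z₀ (D.a₀ * 2 ^ (-m₀))) := by
          rw [hAc']
          refine adr_compare hE hΛc1 hcRE hz₀E (mul_pos ha₀ (htz m₀)) ?_ ?_
          · rw [h2gg, hΛc']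
            have heq : ((K₀ ^ 2 + 8 * D.Cstar) / D.a₀) * (D.a₀ * 2 ^ (-m₀))
                = (K₀ ^ 2 + 8 * D.Cstar) * 2 ^ (-m₀) := by
              field_simp
            nlinarith [mul_pos ha₀ (htz m₀), htz m₀]
          · rw [hΛc']
            have hd := (hRgeom (R : Set (ES n)) R.2).1
            have heq : ((K₀ ^ 2 + 8 * D.Cstar) / D.a₀) * (D.a₀ * 2 ^ (-m₀))
                = (K₀ ^ 2 + 8 * D.Cstar) * 2 ^ (-m₀) := by
              field_simp
            nlinarith [mul_pos ha₀ (htz m₀), htz m₀, mul_pos hCs (htz m₀)]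
        have h3 : μH[(n : ℝ)] (E ∩ ball z₀ (D.a₀ * 2 ^ (-m₀))) ≤ μH[(n : ℝ)] Q₀ :=
          measure_mono (D.contains_ball m₀ Q₀ hQ₀m₀)
        exact h1.trans (h2.trans (mul_le_mul_right h3 _))
      calc ∑' t : ↑Tset, μH[(n : ℝ)] (t : ℤ × Set (ES n)).2
          = ∑' R : Set (ES n), ∑' t : {t : ↑Tset // Rmap t = R},
              μH[(n : ℝ)] ((t : ↑Tset) : ℤ × Set (ES n)).2 := hregroup2
        _ ≤ ∑' R : Set (ES n),
              Set.indicator Rset (fun R => ENNReal.ofReal C₁ * μH[(n : ℝ)] R) R :=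
            ENNReal.tsum_le_tsum hRbound
        _ = ∑' R : ↑Rset, ENNReal.ofReal C₁ * μH[(n : ℝ)] (R : Set (ES n)) :=
            (tsum_subtype Rset _).symm
        _ ≤ ∑' _R : ↑Rset, ENNReal.ofReal C₁ * (ENNReal.ofReal Ac * μH[(n : ℝ)] Q₀) :=
            ENNReal.tsum_le_tsum fun R => mul_le_mul_right (hRcmp R) _
        _ ≤ ENNReal.ofReal At * (ENNReal.ofReal C₁ * (ENNReal.ofReal Ac * μH[(n : ℝ)] Q₀)) :=
            hcount _
        _ ≤ ENNReal.ofReal (C₁ + At * (C₁ * Ac)) * μH[(n : ℝ)] Q₀ := by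
            have heq : ENNReal.ofReal At * (ENNReal.ofReal C₁ *
                (ENNReal.ofReal Ac * μH[(n : ℝ)] Q₀))
                = ENNReal.ofReal (At * (C₁ * Ac)) * μH[(n : ℝ)] Q₀ := by
              rw [ENNReal.ofReal_mul (by linarith : (0:ℝ) ≤ At),
                ENNReal.ofReal_mul (by linarith : (0:ℝ) ≤ C₁)]
              ring
            rw [heq]
            exact mul_le_mul_left (ENNReal.ofReal_le_ofReal (by linarith)) _
  calc ∑' s : S, μH[(n : ℝ)] s.1.2
      = ∑' q : (ℤ × Set (ES n)) × ℤ, ∑' s : {s : S // Φ s = q}, μH[(n : ℝ)] s.1.1.2 := hregroup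
    _ ≤ ENNReal.ofReal ((M + 1 : ℝ) * Af) * ∑' t : ↑Tset, μH[(n : ℝ)] (t : ℤ × Set (ES n)).2 :=
        hsum2
    _ ≤ ENNReal.ofReal ((M + 1 : ℝ) * Af) *
        (ENNReal.ofReal (C₁ + At * (C₁ * Ac)) * μH[(n : ℝ)] Q₀) := mul_le_mul_right hTbound _
    _ = ENNReal.ofReal ((M + 1) * Af * (C₁ + At * (C₁ * Ac))) * μH[(n : ℝ)] Q₀ := by
        rw [← mul_assoc, ← ENNReal.ofReal_mul (by positivity : (0:ℝ) ≤ (M + 1 : ℝ) * Af)]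

end P13

/-- If `ℬ₀` satisfies a Carleson packing condition, then the measure
`α_Q = σ(Q)` when `ℬ₀ ∩ 𝔻_ε(Q) ≠ ∅` (and `0` otherwise) also satisfies a Carleson packing
condition, with constant depending only on `n`, the ADR and dyadic constants, `K₀`, `ε`
and the packing constant of `ℬ₀`. Here `𝔻_ε(Q)` consists of those cubes `Q'` with
`ε^{3/2}ℓ(Q) ≤ ℓ(Q') ≤ ℓ(Q)` meeting `B_Q^* = B(x_Q, K₀²ℓ(Q))`. -/
theorem packing_of_dilated_family (n : ℕ) (C_ADR a₀ γ Cstar K₀ ε C₁ : ℝ)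
    (hK₀ : 1 ≤ K₀) (hε : 0 < ε) (hε1 : ε < 1) (hC₁ : 0 < C₁) :
    ∃ Cε : ℝ,
      ∀ E : Set (ES n), IsADR n C_ADR E →
      ∀ D : DyadicSystem n E, D.a₀ = a₀ → D.γ = γ → D.Cstar = Cstar →
      ∀ B₀ : ℤ → Set (ES n) → Prop,
        PackedBy E D B₀ C₁ →
        PackedBy E D
          (fun k Q => ∃ (k' : ℤ) (Q' : Set (ES n)), Q' ∈ D.cubes k' ∧ B₀ k' Q' ∧
            ε ^ ((3 : ℝ) / 2) * 2 ^ (-k) ≤ 2 ^ (-k') ∧ (2 : ℝ) ^ (-k') ≤ 2 ^ (-k) ∧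
            (Q' ∩ ball (D.center Q) (K₀ ^ 2 * 2 ^ (-k))).Nonempty)
          Cε := by
  classical
  obtain ⟨M, hM0⟩ : ∃ M : ℕ, (ε ^ ((3 : ℝ) / 2))⁻¹ < 2 ^ M :=
    pow_unbounded_of_one_lt _ one_lt_two
  have hε32 : 0 < ε ^ ((3 : ℝ) / 2) := Real.rpow_pos_of_pos hε _
  have hM : (2 : ℝ) ^ (-(M : ℤ)) ≤ ε ^ ((3 : ℝ) / 2) := by
    rw [zpow_neg, zpow_natCast]
    exact (inv_le_comm₀ (by positivity) hε32).mpr hM0.le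
  refine ⟨(M + 1) * (max 1 (C_ADR * 8 ^ (n + 1) * C_ADR *
      (4 * ((K₀ ^ 2 + 2 * Cstar + 1) * 2 ^ M / a₀ + 1)) ^ n)) *
    (C₁ + (max 1 (C_ADR * 8 ^ (n + 1) * C_ADR *
      (4 * ((K₀ ^ 2 + 4 * Cstar + 1) / (2 * a₀) + 1)) ^ n)) *
      (C₁ * (max 1 (C_ADR * 8 ^ (n + 1) * C_ADR *
      (4 * ((K₀ ^ 2 + 8 * Cstar) / a₀ + 1)) ^ n)))), ?_⟩
  intro E hE D hDa hDg hDc B₀ hpack k₀ Q₀ hQ₀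
  subst hDa; subst hDc
  exact P13.main_aux hE D hK₀ hε hC₁ M hM B₀ hpack rfl rfl rfl k₀ Q₀ hQ₀
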